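/- Let γ > 1 and let S : (0,∞) → ℝ be C² with S'(Z) > 0 and (γ-1) S'(Z) + γ S''(Z) Z < 0 for all Z > 0. Then the function h(ρ,p) = ρ S(p/ρ^γ) is concave on the convex set {(ρ,p) : ρ > 0, p > 0}. -/

import Mathlib

open Set Real

lemma h_concave_key (γ R P u v s1 s2 q0 q1 q2 : ℝ) (hγ : 1 < γ)
    (hR : 0 < R) (hP : 0 < P) (hq0 : 0 < q0)
    (e1 : q0 = q1 * R) (e2 : q1 = q2 * R)
    (hs1 : 0 < s1) (hA : (γ - 1) * s1 + γ * s2 * (P / q0) < 0) :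
    u * (s1 * ((v * q0 - P * (u * γ * q1)) / q0 ^ 2)) +
      (u * (s1 * ((v * q0 - P * (u * γ * q1)) / q0 ^ 2)) +
        R * ((s2 * ((v * q0 - P * (u * γ * q1)) / q0 ^ 2)) *
              ((v * q0 - P * (u * γ * q1)) / q0 ^ 2) +
            s1 * (((v * (u * γ * q1) -
                (v * (u * γ * q1) + P * (u * γ * (u * (γ - 1) * q2)))) * q0 ^ 2 -
                (v * q0 - P * (u * γ * q1)) * (2 * q0 ^ 1 * (u * γ * q1))) /
              (q0 ^ 2) ^ 2))) ≤ 0 := by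
  have hq1 : 0 < q1 := by nlinarith
  have hq2 : 0 < q2 := by nlinarith
  have hγ0 : (0:ℝ) < γ := by linarith
  subst e1 e2
  have key : u * (s1 * ((v * (q2 * R * R) - P * (u * γ * (q2 * R))) / (q2 * R * R) ^ 2)) +
      (u * (s1 * ((v * (q2 * R * R) - P * (u * γ * (q2 * R))) / (q2 * R * R) ^ 2)) +
        R * ((s2 * ((v * (q2 * R * R) - P * (u * γ * (q2 * R))) / (q2 * R * R) ^ 2)) *
              ((v * (q2 * R * R) - P * (u * γ * (q2 * R))) / (q2 * R * R) ^ 2) +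
            s1 * (((v * (u * γ * (q2 * R)) -
                (v * (u * γ * (q2 * R)) + P * (u * γ * (u * (γ - 1) * q2)))) * (q2 * R * R) ^ 2 -
                (v * (q2 * R * R) - P * (u * γ * (q2 * R))) * (2 * (q2 * R * R) ^ 1 * (u * γ * (q2 * R)))) /
              ((q2 * R * R) ^ 2) ^ 2)))
      = (((γ - 1) * s1 + γ * s2 * (P / (q2 * R * R))) * (γ * P * u - R * v) ^ 2
          - (γ - 1) * s1 * R ^ 2 * v ^ 2) / (γ * P * R * (q2 * R * R)) := by
    field_simp
    ring
  rw [key]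
  apply div_nonpos_of_nonpos_of_nonneg
  · have t1 : ((γ - 1) * s1 + γ * s2 * (P / (q2 * R * R))) * (γ * P * u - R * v) ^ 2 ≤ 0 :=
      mul_nonpos_of_nonpos_of_nonneg hA.le (sq_nonneg _)
    have t2 : (0:ℝ) ≤ (γ - 1) * s1 * R ^ 2 * v ^ 2 :=
      mul_nonneg (mul_nonneg (mul_nonneg (by linarith) hs1.le) (sq_nonneg R)) (sq_nonneg v)
    linarith
  · positivity

lemma h_concave_seg (γ : ℝ) (hγ : 1 < γ) (S : ℝ → ℝ)
    (hS : ContDiffOn ℝ 2 S (Set.Ioi (0 : ℝ)))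
    (hS' : ∀ Z : ℝ, 0 < Z → 0 < deriv S Z)
    (hcond : ∀ Z : ℝ, 0 < Z → (γ - 1) * deriv S Z + γ * deriv (deriv S) Z * Z < 0)
    (x1 x2 u v : ℝ)
    (hpos : ∀ t ∈ Set.Icc (0:ℝ) 1, 0 < x1 + t * u ∧ 0 < x2 + t * v) :
    ConcaveOn ℝ (Set.Icc (0:ℝ) 1)
      (fun t => (x1 + t * u) * S ((x2 + t * v) / (x1 + t * u) ^ γ)) := by
  have hSd : ∀ z : ℝ, 0 < z → HasDerivAt S (deriv S z) z := fun z hz =>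
    ((hS.differentiableOn (by norm_num)).differentiableAt (Ioi_mem_nhds hz)).hasDerivAt
  have hS1c : ContDiffOn ℝ 1 (deriv S) (Set.Ioi 0) :=
    hS.deriv_of_isOpen isOpen_Ioi (by norm_num)
  have hS1d : ∀ z : ℝ, 0 < z → HasDerivAt (deriv S) (deriv (deriv S) z) z := fun z hz =>
    ((hS1c.differentiableOn (by norm_num)).differentiableAt (Ioi_mem_nhds hz)).hasDerivAt
  -- first derivative
  have hbase : ∀ t : ℝ, 0 < x1 + t * u → 0 < x2 + t * v →
      HasDerivAt (fun s => (x1 + s * u) * S ((x2 + s * v) / (x1 + s * u) ^ γ))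
        (u * S ((x2 + t * v) / (x1 + t * u) ^ γ) +
          (x1 + t * u) * (deriv S ((x2 + t * v) / (x1 + t * u) ^ γ) *
            ((v * (x1 + t * u) ^ γ - (x2 + t * v) * (u * γ * (x1 + t * u) ^ (γ - 1))) /
              ((x1 + t * u) ^ γ) ^ 2))) t := by
    intro t hR hP
    have dR : HasDerivAt (fun s : ℝ => x1 + s * u) u t := by
      simpa using ((hasDerivAt_id t).mul_const u).const_add x1
    have dP : HasDerivAt (fun s : ℝ => x2 + s * v) v t := by
      simpa using ((hasDerivAt_id t).mul_const v).const_add x2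
    have dq : HasDerivAt (fun s : ℝ => (x1 + s * u) ^ γ)
        (u * γ * (x1 + t * u) ^ (γ - 1)) t := dR.rpow_const (Or.inl hR.ne')
    have dZ : HasDerivAt (fun s : ℝ => (x2 + s * v) / (x1 + s * u) ^ γ)
        ((v * (x1 + t * u) ^ γ - (x2 + t * v) * (u * γ * (x1 + t * u) ^ (γ - 1))) /
          ((x1 + t * u) ^ γ) ^ 2) t := dP.div dq (rpow_pos_of_pos hR γ).ne'
    have hZpos : 0 < (x2 + t * v) / (x1 + t * u) ^ γ := div_pos hP (rpow_pos_of_pos hR γ)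
    have dS : HasDerivAt S (deriv S ((x2 + t * v) / (x1 + t * u) ^ γ))
        ((x2 + t * v) / (x1 + t * u) ^ γ) := hSd _ hZpos
    exact dR.mul (dS.comp t dZ)
  -- second derivative
  have hbase2 : ∀ t : ℝ, 0 < x1 + t * u → 0 < x2 + t * v →
      HasDerivAt (fun s => u * S ((x2 + s * v) / (x1 + s * u) ^ γ) +
          (x1 + s * u) * (deriv S ((x2 + s * v) / (x1 + s * u) ^ γ) *
            ((v * (x1 + s * u) ^ γ - (x2 + s * v) * (u * γ * (x1 + s * u) ^ (γ - 1))) /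
              ((x1 + s * u) ^ γ) ^ 2)))
        (u * (deriv S ((x2 + t * v) / (x1 + t * u) ^ γ) *
              ((v * (x1 + t * u) ^ γ - (x2 + t * v) * (u * γ * (x1 + t * u) ^ (γ - 1))) /
                ((x1 + t * u) ^ γ) ^ 2)) +
          (u * (deriv S ((x2 + t * v) / (x1 + t * u) ^ γ) *
              ((v * (x1 + t * u) ^ γ - (x2 + t * v) * (u * γ * (x1 + t * u) ^ (γ - 1))) /
                ((x1 + t * u) ^ γ) ^ 2)) +
            (x1 + t * u) * ((deriv (deriv S) ((x2 + t * v) / (x1 + t * u) ^ γ) *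
                  ((v * (x1 + t * u) ^ γ - (x2 + t * v) * (u * γ * (x1 + t * u) ^ (γ - 1))) /
                    ((x1 + t * u) ^ γ) ^ 2)) *
                ((v * (x1 + t * u) ^ γ - (x2 + t * v) * (u * γ * (x1 + t * u) ^ (γ - 1))) /
                  ((x1 + t * u) ^ γ) ^ 2) +
              deriv S ((x2 + t * v) / (x1 + t * u) ^ γ) *
                (((v * (u * γ * (x1 + t * u) ^ (γ - 1)) -
                    (v * (u * γ * (x1 + t * u) ^ (γ - 1)) +
                      (x2 + t * v) * (u * γ * (u * (γ - 1) * (x1 + t * u) ^ (γ - 1 - 1))))) *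
                    ((x1 + t * u) ^ γ) ^ 2 -
                    (v * (x1 + t * u) ^ γ - (x2 + t * v) * (u * γ * (x1 + t * u) ^ (γ - 1))) *
                      (2 * ((x1 + t * u) ^ γ) ^ 1 * (u * γ * (x1 + t * u) ^ (γ - 1)))) /
                  (((x1 + t * u) ^ γ) ^ 2) ^ 2)))) t := by
    intro t hR hP
    have dR : HasDerivAt (fun s : ℝ => x1 + s * u) u t := by
      simpa using ((hasDerivAt_id t).mul_const u).const_add x1
    have dP : HasDerivAt (fun s : ℝ => x2 + s * v) v t := by
      simpa using ((hasDerivAt_id t).mul_const v).const_add x2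
    have dq : HasDerivAt (fun s : ℝ => (x1 + s * u) ^ γ)
        (u * γ * (x1 + t * u) ^ (γ - 1)) t := dR.rpow_const (Or.inl hR.ne')
    have dq1 : HasDerivAt (fun s : ℝ => (x1 + s * u) ^ (γ - 1))
        (u * (γ - 1) * (x1 + t * u) ^ (γ - 1 - 1)) t := dR.rpow_const (Or.inl hR.ne')
    have dZ : HasDerivAt (fun s : ℝ => (x2 + s * v) / (x1 + s * u) ^ γ)
        ((v * (x1 + t * u) ^ γ - (x2 + t * v) * (u * γ * (x1 + t * u) ^ (γ - 1))) /
          ((x1 + t * u) ^ γ) ^ 2) t := dP.div dq (rpow_pos_of_pos hR γ).ne'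
    have hZpos : 0 < (x2 + t * v) / (x1 + t * u) ^ γ := div_pos hP (rpow_pos_of_pos hR γ)
    have dN : HasDerivAt
        (fun s : ℝ => v * (x1 + s * u) ^ γ - (x2 + s * v) * (u * γ * (x1 + s * u) ^ (γ - 1)))
        (v * (u * γ * (x1 + t * u) ^ (γ - 1)) -
          (v * (u * γ * (x1 + t * u) ^ (γ - 1)) +
            (x2 + t * v) * (u * γ * (u * (γ - 1) * (x1 + t * u) ^ (γ - 1 - 1))))) t :=
      (dq.const_mul v).sub (dP.mul (dq1.const_mul (u * γ)))
    have dB : HasDerivAt (fun s : ℝ => ((x1 + s * u) ^ γ) ^ 2)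
        (2 * ((x1 + t * u) ^ γ) ^ 1 * (u * γ * (x1 + t * u) ^ (γ - 1))) t := by
      have := dq.fun_pow 2
      norm_num at this
      exact this.congr_deriv (by ring)
    have dZd : HasDerivAt
        (fun s : ℝ => (v * (x1 + s * u) ^ γ - (x2 + s * v) * (u * γ * (x1 + s * u) ^ (γ - 1))) /
          ((x1 + s * u) ^ γ) ^ 2)
        (((v * (u * γ * (x1 + t * u) ^ (γ - 1)) -
            (v * (u * γ * (x1 + t * u) ^ (γ - 1)) +
              (x2 + t * v) * (u * γ * (u * (γ - 1) * (x1 + t * u) ^ (γ - 1 - 1))))) *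
            ((x1 + t * u) ^ γ) ^ 2 -
            (v * (x1 + t * u) ^ γ - (x2 + t * v) * (u * γ * (x1 + t * u) ^ (γ - 1))) *
              (2 * ((x1 + t * u) ^ γ) ^ 1 * (u * γ * (x1 + t * u) ^ (γ - 1)))) /
          (((x1 + t * u) ^ γ) ^ 2) ^ 2) t :=
      dN.div dB (pow_ne_zero 2 (rpow_pos_of_pos hR γ).ne')
    have dSZ : HasDerivAt (fun s : ℝ => S ((x2 + s * v) / (x1 + s * u) ^ γ))
        (deriv S ((x2 + t * v) / (x1 + t * u) ^ γ) *
          ((v * (x1 + t * u) ^ γ - (x2 + t * v) * (u * γ * (x1 + t * u) ^ (γ - 1))) /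
            ((x1 + t * u) ^ γ) ^ 2)) t := (hSd _ hZpos).comp t dZ
    have dS1Z : HasDerivAt (fun s : ℝ => deriv S ((x2 + s * v) / (x1 + s * u) ^ γ))
        (deriv (deriv S) ((x2 + t * v) / (x1 + t * u) ^ γ) *
          ((v * (x1 + t * u) ^ γ - (x2 + t * v) * (u * γ * (x1 + t * u) ^ (γ - 1))) /
            ((x1 + t * u) ^ γ) ^ 2)) t := by
      have := (hS1d _ hZpos).comp t dZ
      exact this
    exact (dSZ.const_mul u).add (dR.mul (dS1Z.mul dZd))
  refine concaveOn_of_hasDerivWithinAt2_nonpos (convex_Icc 0 1)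
    (f' := fun t => u * S ((x2 + t * v) / (x1 + t * u) ^ γ) +
          (x1 + t * u) * (deriv S ((x2 + t * v) / (x1 + t * u) ^ γ) *
            ((v * (x1 + t * u) ^ γ - (x2 + t * v) * (u * γ * (x1 + t * u) ^ (γ - 1))) /
              ((x1 + t * u) ^ γ) ^ 2)))
    (f'' := fun t => u * (deriv S ((x2 + t * v) / (x1 + t * u) ^ γ) *
              ((v * (x1 + t * u) ^ γ - (x2 + t * v) * (u * γ * (x1 + t * u) ^ (γ - 1))) /
                ((x1 + t * u) ^ γ) ^ 2)) +
          (u * (deriv S ((x2 + t * v) / (x1 + t * u) ^ γ) *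
              ((v * (x1 + t * u) ^ γ - (x2 + t * v) * (u * γ * (x1 + t * u) ^ (γ - 1))) /
                ((x1 + t * u) ^ γ) ^ 2)) +
            (x1 + t * u) * ((deriv (deriv S) ((x2 + t * v) / (x1 + t * u) ^ γ) *
                  ((v * (x1 + t * u) ^ γ - (x2 + t * v) * (u * γ * (x1 + t * u) ^ (γ - 1))) /
                    ((x1 + t * u) ^ γ) ^ 2)) *
                ((v * (x1 + t * u) ^ γ - (x2 + t * v) * (u * γ * (x1 + t * u) ^ (γ - 1))) /
                  ((x1 + t * u) ^ γ) ^ 2) +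
              deriv S ((x2 + t * v) / (x1 + t * u) ^ γ) *
                (((v * (u * γ * (x1 + t * u) ^ (γ - 1)) -
                    (v * (u * γ * (x1 + t * u) ^ (γ - 1)) +
                      (x2 + t * v) * (u * γ * (u * (γ - 1) * (x1 + t * u) ^ (γ - 1 - 1))))) *
                    ((x1 + t * u) ^ γ) ^ 2 -
                    (v * (x1 + t * u) ^ γ - (x2 + t * v) * (u * γ * (x1 + t * u) ^ (γ - 1))) *
                      (2 * ((x1 + t * u) ^ γ) ^ 1 * (u * γ * (x1 + t * u) ^ (γ - 1)))) /
                  (((x1 + t * u) ^ γ) ^ 2) ^ 2)))) ?_ ?_ ?_ ?_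
  · intro t ht
    exact (hbase t (hpos t ht).1 (hpos t ht).2).continuousAt.continuousWithinAt
  · intro t ht
    have ht' := interior_subset ht
    exact (hbase t (hpos t ht').1 (hpos t ht').2).hasDerivWithinAt
  · intro t ht
    have ht' := interior_subset ht
    exact (hbase2 t (hpos t ht').1 (hpos t ht').2).hasDerivWithinAt
  · intro t ht
    have ht' := interior_subset ht
    have hR := (hpos t ht').1
    have hP := (hpos t ht').2
    have hZpos : 0 < (x2 + t * v) / (x1 + t * u) ^ γ := div_pos hP (rpow_pos_of_pos hR γ)
    have e1 : (x1 + t * u) ^ γ = (x1 + t * u) ^ (γ - 1) * (x1 + t * u) := by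
      rw [← Real.rpow_add_one hR.ne' (γ - 1)]
      congr 1
      ring
    have e2 : (x1 + t * u) ^ (γ - 1) = (x1 + t * u) ^ (γ - 1 - 1) * (x1 + t * u) := by
      rw [← Real.rpow_add_one hR.ne' (γ - 1 - 1)]
      congr 1
      ring
    exact h_concave_key γ (x1 + t * u) (x2 + t * v) u v
      (deriv S ((x2 + t * v) / (x1 + t * u) ^ γ))
      (deriv (deriv S) ((x2 + t * v) / (x1 + t * u) ^ γ))
      ((x1 + t * u) ^ γ) ((x1 + t * u) ^ (γ - 1)) ((x1 + t * u) ^ (γ - 1 - 1))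
      hγ hR hP (rpow_pos_of_pos hR γ) e1 e2 (hS' _ hZpos) (hcond _ hZpos)

/-- under `S' > 0` and `(γ-1)S' + γ S'' Z < 0`, the function
`h(ρ,p) = ρ S(p/ρ^γ)` is concave on `{ρ > 0, p > 0}`. -/
theorem h_concave (γ : ℝ) (hγ : 1 < γ) (S : ℝ → ℝ)
    (hS : ContDiffOn ℝ 2 S (Set.Ioi (0 : ℝ)))
    (hS' : ∀ Z : ℝ, 0 < Z → 0 < deriv S Z)
    (hcond : ∀ Z : ℝ, 0 < Z → (γ - 1) * deriv S Z + γ * deriv (deriv S) Z * Z < 0) :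
    ConcaveOn ℝ (Set.Ioi (0 : ℝ) ×ˢ Set.Ioi (0 : ℝ))
      (fun x : ℝ × ℝ => x.1 * S (x.2 / x.1 ^ γ)) := by
  have hD : Convex ℝ (Set.Ioi (0:ℝ) ×ˢ Set.Ioi (0:ℝ)) := (convex_Ioi 0).prod (convex_Ioi 0)
  refine ⟨hD, ?_⟩
  intro x hx y hy a b ha hb hab
  have hpos : ∀ t ∈ Set.Icc (0:ℝ) 1, 0 < x.1 + t * (y.1 - x.1) ∧ 0 < x.2 + t * (y.2 - x.2) := by
    intro t ht
    have hmem := hD hx hy (by linarith [ht.2] : (0:ℝ) ≤ 1 - t) ht.1 (by ring)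
    have e : (1 - t) • x + t • y = (x.1 + t * (y.1 - x.1), x.2 + t * (y.2 - x.2)) := by
      ext <;> simp [Prod.smul_def, smul_eq_mul] <;> ring
    rw [e] at hmem
    exact ⟨hmem.1, hmem.2⟩
  have hseg := h_concave_seg γ hγ S hS hS' hcond x.1 x.2 (y.1 - x.1) (y.2 - x.2) hpos
  have hkey := hseg.2 (Set.left_mem_Icc.2 (by norm_num)) (Set.right_mem_Icc.2 (by norm_num))
    ha hb hab
  simp only [smul_eq_mul, mul_zero, mul_one, zero_add, zero_mul, add_zero, one_mul] at hkey ⊢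
  have ea : a = 1 - b := by linarith
  have E1 : x.1 + (y.1 - x.1) = y.1 := by ring
  have E2 : x.2 + (y.2 - x.2) = y.2 := by ring
  rw [E1, E2] at hkey
  have B1 : x.1 + b * (y.1 - x.1) = (a • x + b • y).1 := by
    simp [Prod.smul_def, smul_eq_mul, ea]; ring
  have B2 : x.2 + b * (y.2 - x.2) = (a • x + b • y).2 := by
    simp [Prod.smul_def, smul_eq_mul, ea]; ring
  rw [B1, B2] at hkey
  exact hkey
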